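/- arXiv:2203.12490 — 5 statements merged into one kernel-verified Lean document; each statement's English description precedes it below -/
import Mathlib

section
/- The category 𝔾, defined as the full subcategory of the category AddCommGrp of abelian groups whose objects are the additive groups (Fin n → ZMod 2) for n : ℕ, has kernels: every morphism in 𝔾 has a kernel in 𝔾. -/
open CategoryTheory

/-- The objects of the category `𝔾`: abelian groups of the form `Fin n → ZMod 2`. -/
def IsFinitePowerOfZMod2 (A : AddCommGrpCat) : Prop :=
  ∃ n : ℕ, A = AddCommGrpCat.of (Fin n → ZMod 2)

/-- The category `𝔾`: the full subcategory of `AddCommGrp` on the finite direct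
powers of `ℤ/2ℤ`. -/
abbrev GCat := ObjectProperty.FullSubcategory IsFinitePowerOfZMod2

/-- Any finite abelian group of exponent 2 is isomorphic to a finite power of `ℤ/2ℤ`. -/
lemma exists_equiv_gcat_aux (A : Type) [AddCommGroup A] [Finite A]
    (h2 : ∀ x : A, x + x = 0) :
    ∃ m : ℕ, Nonempty ((Fin m → ZMod 2) ≃+ A) := by
  letI : Module (ZMod 2) A := AddCommGroup.zmodModule (by intro x; simpa [two_nsmul] using h2 x)
  haveI : Module.Finite (ZMod 2) A := Module.Finite.of_finite
  exact ⟨Module.finrank (ZMod 2) A,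
    ⟨((Module.finBasis (ZMod 2) A).equivFun.symm.toAddEquiv)⟩⟩

theorem stmt_3 : Limits.HasKernels GCat := by
  constructor
  intro X Y f
  obtain ⟨n, hn⟩ := X.2
  have eX : X.obj ≃+ (Fin n → ZMod 2) :=
    (CategoryTheory.eqToIso hn).addCommGroupIsoToAddEquiv
  haveI : Finite X.obj := Finite.of_equiv _ eX.symm.toEquiv
  have h2 : ∀ x : X.obj, x + x = 0 := by
    intro x
    apply eX.injective
    rw [map_add, map_zero]
    funext i
    exact (by decide : ∀ a : ZMod 2, a + a = 0) _
  let f' : X.obj →+ Y.obj := f.hom.hom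
  let K : AddSubgroup X.obj := f'.ker
  obtain ⟨m, ⟨e⟩⟩ := exists_equiv_gcat_aux K (fun x => Subtype.ext (h2 x))
  let Z : GCat := ⟨AddCommGrpCat.of (Fin m → ZMod 2), m, rfl⟩
  let ι' : (Fin m → ZMod 2) →+ X.obj := K.subtype.comp e.toAddMonoidHom
  let ι : Z ⟶ X := ObjectProperty.homMk (AddCommGrpCat.ofHom ι')
  have w : ι ≫ f = 0 := by
    apply ObjectProperty.hom_ext; apply AddCommGrpCat.hom_ext
    show AddMonoidHom.comp f' ι' = 0
    exact DFunLike.ext _ _ fun z => (e z).2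
  haveI : Mono ι := by
    constructor
    intro W g h hgh
    let g' : W.obj →+ (Fin m → ZMod 2) := g.hom.hom
    let h' : W.obj →+ (Fin m → ZMod 2) := h.hom.hom
    have key : ∀ x : W.obj, ι' (g' x) = ι' (h' x) :=
      fun x => congrArg (fun (p : W ⟶ X) => p.hom.hom x) hgh
    apply ObjectProperty.hom_ext; apply AddCommGrpCat.hom_ext
    show g' = h'
    exact DFunLike.ext _ _ fun x => e.injective (Subtype.ext (key x))
  exact Limits.HasLimit.mk ⟨Limits.KernelFork.ofι ι w,
    Limits.KernelFork.IsLimit.ofι' ι w (fun {A} k hk => by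
      let k' : A.obj →+ X.obj := k.hom.hom
      have hmem : ∀ a : A.obj, k' a ∈ K :=
        fun a => congrArg (fun (p : A ⟶ Y) => p.hom.hom a) hk
      refine ⟨ObjectProperty.homMk (AddCommGrpCat.ofHom (e.symm.toAddMonoidHom.comp (k'.codRestrict K hmem)
          : A.obj →+ (Fin m → ZMod 2))), ?_⟩
      apply ObjectProperty.hom_ext; apply AddCommGrpCat.hom_ext
      show ι'.comp (e.symm.toAddMonoidHom.comp (k'.codRestrict K hmem)) = k'
      refine DFunLike.ext _ _ fun a => ?_
      show (e (e.symm ⟨k' a, hmem a⟩) : X.obj) = k' a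
      rw [e.apply_symm_apply])⟩
end

section
/- The category 𝔾, defined as the full subcategory of the category AddCommGrp of abelian groups whose objects are the additive groups (Fin n → ZMod 2) for n : ℕ, has cokernels: every morphism in 𝔾 has a cokernel in 𝔾. -/
open CategoryTheory

lemma aux_finite_exp2 (A : AddCommGrpCat) (h : IsFinitePowerOfZMod2 A) :
    Finite A ∧ ∀ x : A, x + x = 0 := by
  obtain ⟨n, rfl⟩ := h
  refine ⟨inferInstanceAs (Finite (Fin n → ZMod 2)), fun x => ?_⟩
  show x + x = 0
  funext i
  exact CharTwo.add_self_eq_zero (x i)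

theorem stmt_4 : Limits.HasCokernels GCat := by
  constructor
  intro X Y f
  obtain ⟨hfin, hexp⟩ := aux_finite_exp2 Y.obj Y.property
  haveI : Finite Y.obj := hfin
  let f' : X.obj →+ Y.obj := f.hom.hom
  set N : AddSubgroup Y.obj := f'.range with hN
  haveI : Finite (Y.obj ⧸ N) := Quotient.finite _
  haveI : Module (ZMod 2) (Y.obj ⧸ N) := by
    refine AddCommGroup.zmodModule (fun q => ?_)
    induction q using QuotientAddGroup.induction_on with
    | _ b =>
      show ((2 • b : Y.obj) : Y.obj ⧸ N) = 0
      rw [two_nsmul, hexp b]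
      rfl
  haveI : Module.Finite (ZMod 2) (Y.obj ⧸ N) := Module.Finite.of_finite
  set k := Module.finrank (ZMod 2) (Y.obj ⧸ N) with hk
  let e : (Y.obj ⧸ N) ≃ₗ[ZMod 2] (Fin k → ZMod 2) :=
    (Module.finBasis (ZMod 2) (Y.obj ⧸ N)).equivFun
  let C : GCat := ⟨AddCommGrpCat.of (Fin k → ZMod 2), k, rfl⟩
  let π' : Y.obj →+ (Fin k → ZMod 2) :=
    e.toAddEquiv.toAddMonoidHom.comp (QuotientAddGroup.mk' N)
  let π : Y ⟶ C := ObjectProperty.homMk (AddCommGrpCat.ofHom π')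
  have hw : f ≫ π = 0 := by
    refine ObjectProperty.hom_ext _ (AddCommGrpCat.hom_ext (AddMonoidHom.ext fun x => ?_))
    show e ((f' x : Y.obj) : Y.obj ⧸ N) = 0
    have hx : (f' x : Y.obj) ∈ N := AddMonoidHom.mem_range.mpr ⟨x, rfl⟩
    rw [(QuotientAddGroup.eq_zero_iff _).2 hx, map_zero]
  have hπsurj : Function.Surjective π' := by
    intro v
    obtain ⟨q, hq⟩ := e.surjective v
    obtain ⟨b, rfl⟩ := QuotientAddGroup.mk'_surjective N q
    exact ⟨b, hq⟩
  have hle : ∀ {W : GCat} (g : Y ⟶ W), f ≫ g = 0 →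
      N ≤ AddMonoidHom.ker g.hom.hom := by
    intro W g hg
    let gA : Y.obj →+ W.obj := g.hom.hom
    have hg' : ∀ x : X.obj, gA (f' x) = 0 := by
      intro x
      exact congrArg (fun h : X ⟶ W => h.hom.hom x) hg
    rintro _ ⟨x, rfl⟩
    exact hg' x
  let desc : ∀ {W : GCat} (g : Y ⟶ W), f ≫ g = 0 → (C ⟶ W) := fun {W} g hg =>
    ObjectProperty.homMk (AddCommGrpCat.ofHom ((QuotientAddGroup.lift N g.hom.hom (hle g hg)).comp
      e.symm.toAddEquiv.toAddMonoidHom : (Fin k → ZMod 2) →+ W.obj))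
  refine Limits.HasColimit.mk ⟨Limits.CokernelCofork.ofπ π hw,
    Limits.CokernelCofork.IsColimit.ofπ π hw (fun {W} g hg => desc g hg) ?_ ?_⟩
  · -- fac
    intro W g hg
    let gA : Y.obj →+ W.obj := g.hom.hom
    refine ObjectProperty.hom_ext _ (AddCommGrpCat.hom_ext (AddMonoidHom.ext fun b => ?_))
    show (QuotientAddGroup.lift N gA (hle g hg))
      (e.symm (e ((b : Y.obj) : Y.obj ⧸ N))) = gA b
    rw [e.symm_apply_apply]
    rfl
  · -- uniq
    intro W g hg m hm
    let gA : Y.obj →+ W.obj := g.hom.hom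
    let mA : C.obj →+ W.obj := m.hom.hom
    have hm2 : ∀ b : Y.obj, mA (π' b) = gA b := by
      intro b
      exact congrArg (fun h : Y ⟶ W => h.hom.hom b) hm
    refine ObjectProperty.hom_ext _ (AddCommGrpCat.hom_ext (AddMonoidHom.ext fun v => ?_))
    obtain ⟨b, rfl⟩ := hπsurj v
    show mA (π' b) = (QuotientAddGroup.lift N gA
      (hle g hg)) (e.symm (e ((b : Y.obj) : Y.obj ⧸ N)))
    rw [hm2 b, e.symm_apply_apply]
    rfl
end

section
/- Let C be a small category with all finite limits and let u : C ⥤ Type be a functor preserving finite limits. Then the stalk functor from presheaves to Type, sending F : Cᵒᵖ ⥤ Type to the colimit of the composite of the opposite of the projection u.Elements ⥤ C with F (i.e. F ↦ colim over (u.Elements)ᵒᵖ of F(U)), preserves finite limits. -/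
open CategoryTheory Limits

/-- The stalk functor associated to a functor `u : C ⥤ Type`: it sends a presheaf
`F : Cᵒᵖ ⥤ Type` to the colimit of `F` over the (opposite of the) category of
elements of `u`. -/
noncomputable def stalkFunctor {C : Type} [SmallCategory C] (u : C ⥤ Type) :
    (Cᵒᵖ ⥤ Type) ⥤ Type :=
  (Functor.whiskeringLeft u.Elementsᵒᵖ Cᵒᵖ Type).obj (CategoryOfElements.π u).op ⋙ colim

theorem stmt_10 (C : Type) [SmallCategory C] [HasFiniteLimits C]
    (u : C ⥤ Type) [PreservesFiniteLimits u] :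
    PreservesFiniteLimits (stalkFunctor u) := by
  have : RepresentablyFlat u := flat_of_preservesFiniteLimits u
  have h1 : IsCofiltered u.Elements :=
    IsCofiltered.of_equivalence (CategoryOfElements.structuredArrowEquivalence u).symm
  have h2 : IsFiltered u.Elementsᵒᵖ := inferInstance
  have : PreservesFiniteLimits (colim : (u.Elementsᵒᵖ ⥤ Type) ⥤ _) := inferInstance
  have : PreservesFiniteLimits ((Functor.whiskeringLeft u.Elementsᵒᵖ Cᵒᵖ Type).obj (CategoryOfElements.π u).op) :=
    ⟨fun _ _ _ => inferInstance⟩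
  exact comp_preservesFiniteLimits _ _
end

section
/- Let (C, J) be a small site where C has all finite limits, and let (u_k : C ⥤ Type)_{k ∈ K} be a family of functors such that each u_k preserves finite limits and, for every J-covering family {U_i → U}, the induced map from the disjoint union of the sets u_k.obj U_i to u_k.obj U is surjective. Suppose that for every J-sheaf of types F, every object U of C and all s, s' ∈ F.obj (op U), there exist k ∈ K and x ∈ u_k.obj U such that equality of the germs of s and s' at (U, x) in the stalk of F at u_k implies s = s'. Then the family is conservative: for every morphism Φ : F ⟶ G of J-sheaves of types, if for every k ∈ K the induced map between the stalks of F and G at u_k is a bijection, then Φ is an isomorphism of sheaves. -/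
open CategoryTheory Limits Opposite

/-- The stalk of a presheaf `F : Cᵒᵖ ⥤ Type` at a functor `u : C ⥤ Type`: the colimit
of `F` over the (opposite of the) category of elements of `u`. -/
noncomputable def pointStalk {C : Type} [SmallCategory C] (u : C ⥤ Type)
    (F : Cᵒᵖ ⥤ Type) : Type :=
  colimit ((CategoryOfElements.π u).op ⋙ F)

/-- The germ of a section `s ∈ F(U)` at the element `x ∈ u.obj U`. -/
noncomputable def germ {C : Type} [SmallCategory C] (u : C ⥤ Type) (F : Cᵒᵖ ⥤ Type)
    (U : C) (x : u.obj U) (s : F.obj (op U)) : pointStalk u F :=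
  colimit.ι ((CategoryOfElements.π u).op ⋙ F) (op ⟨U, x⟩) s

/-- The map induced on stalks at `u` by a morphism of presheaves, given by
functoriality of the colimit. -/
noncomputable def stalkMap {C : Type} [SmallCategory C] (u : C ⥤ Type)
    {F G : Cᵒᵖ ⥤ Type} (φ : F ⟶ G) : pointStalk u F → pointStalk u G :=
  colimMap (Functor.whiskerLeft (CategoryOfElements.π u).op φ)

lemma stalkMap_germ {C : Type} [SmallCategory C] (u : C ⥤ Type) {F G : Cᵒᵖ ⥤ Type}
    (φ : F ⟶ G) (U : C) (x : u.obj U) (s : F.obj (op U)) :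
    stalkMap u φ (germ u F U x s) = germ u G U x (φ.app (op U) s) := by
  have := ConcreteCategory.congr_hom (ι_colimMap (Functor.whiskerLeft (CategoryOfElements.π u).op φ)
    (op ⟨U, x⟩)) s
  exact this

lemma stalkMap_comp {C : Type} [SmallCategory C] (u : C ⥤ Type) {F G H : Cᵒᵖ ⥤ Type}
    (φ : F ⟶ G) (ψ : G ⟶ H) (t : pointStalk u F) :
    stalkMap u (φ ≫ ψ) t = stalkMap u ψ (stalkMap u φ t) := by
  have h : Functor.whiskerLeft (CategoryOfElements.π u).op (φ ≫ ψ) =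
      Functor.whiskerLeft (CategoryOfElements.π u).op φ ≫ Functor.whiskerLeft (CategoryOfElements.π u).op ψ := rfl
  have := ConcreteCategory.congr_hom (show colimMap (Functor.whiskerLeft (CategoryOfElements.π u).op φ ≫
      Functor.whiskerLeft (CategoryOfElements.π u).op ψ) = _ from colim.map_comp _ _) t
  rw [stalkMap, h]
  exact this

theorem stmt_11 (C : Type) [SmallCategory C] [HasFiniteLimits C]
    (J : GrothendieckTopology C) (K : Type) (u : K → C ⥤ Type)
    (hpres : ∀ k, PreservesFiniteLimits (u k))
    (hcov : ∀ k (U : C) (S : Sieve U), S ∈ J U → ∀ y : (u k).obj U,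
      ∃ (V : C) (f : V ⟶ U) (_ : S f) (x : (u k).obj V), (u k).map f x = y)
    (hsep : ∀ (F : Sheaf J Type) (U : C) (s s' : F.val.obj (op U)),
      ∃ (k : K) (x : (u k).obj U),
        germ (u k) F.val U x s = germ (u k) F.val U x s' → s = s')
    {F G : Sheaf J Type} (Φ : F ⟶ G)
    (hΦ : ∀ k, Function.Bijective (stalkMap (u k) Φ.hom)) :
    IsIso Φ := by
  -- Step 1: each component of `Φ.hom` is injective
  have hinj : ∀ (U : Cᵒᵖ), Function.Injective (Φ.hom.app U) := by
    intro U s s' h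
    obtain ⟨k, x, hk⟩ := hsep F (unop U) s s'
    apply hk
    apply (hΦ k).1
    rw [stalkMap_germ, stalkMap_germ]
    simp only [op_unop] at h ⊢
    rw [h]
  -- Step 2: `Φ` is a monomorphism
  have hm : Mono Φ.hom := by
    haveI : ∀ X, Mono (Φ.hom.app X) :=
      fun X => (CategoryTheory.mono_iff_injective _).2 (hinj X)
    exact NatTrans.mono_of_mono_app Φ.hom
  have hmono : Mono Φ := (sheafToPresheaf J Type).mono_of_mono_map hm
  -- Step 3: the two pushout inclusions agree
  have key : pushout.inl Φ Φ = pushout.inr Φ Φ := by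
    -- stalk maps of the two inclusions agree
    have hst : ∀ k (t : pointStalk (u k) G.val),
        stalkMap (u k) (pushout.inl Φ Φ).hom t = stalkMap (u k) (pushout.inr Φ Φ).hom t := by
      intro k t
      obtain ⟨w, rfl⟩ := (hΦ k).2 t
      rw [← stalkMap_comp, ← stalkMap_comp]
      have : (Φ ≫ pushout.inl Φ Φ).hom = (Φ ≫ pushout.inr Φ Φ).hom := by
        rw [pushout.condition]
      change Φ.hom ≫ (pushout.inl Φ Φ).hom = Φ.hom ≫ (pushout.inr Φ Φ).hom at this
      rw [this]
    apply Sheaf.hom_ext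
    apply NatTrans.ext
    funext U
    ext t
    obtain ⟨k, x, hk⟩ := hsep (pushout Φ Φ) (unop U)
      ((pushout.inl Φ Φ).hom.app U t) ((pushout.inr Φ Φ).hom.app U t)
    have h1 := stalkMap_germ (u k) (pushout.inl Φ Φ).hom (unop U) x t
    have h2 := stalkMap_germ (u k) (pushout.inr Φ Φ).hom (unop U) x t
    simp only [op_unop] at h1 h2 hk
    exact hk (by rw [← h1, ← h2, hst])
  -- Step 4: `Φ` is an epimorphism
  have hepi : Epi Φ := by
    constructor
    intro Z g h hgh
    have d := pushout.desc (f := Φ) (g := Φ) g h hgh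
    calc g = pushout.inl Φ Φ ≫ pushout.desc g h hgh := (pushout.inl_desc _ _ _).symm
      _ = pushout.inr Φ Φ ≫ pushout.desc g h hgh := by rw [key]
      _ = h := pushout.inr_desc _ _ _
  exact isIso_of_mono_of_epi Φ
end

section
/- Let C be a small preregular category with all finite limits, equipped with the regular topology (the Grothendieck topology whose covering families are generated by single effective epimorphisms). Then for every object U of C there exist a functor u : C ⥤ Type preserving finite limits such that u sends every effective epimorphism of C to a surjective map, together with an element x₀ ∈ u.obj U, such that for every sheaf of types F on (C, regular topology), the germ map F.obj (op U) → (stalk of F at u), sending s to the germ of s at (U, x₀), is injective. -/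
open CategoryTheory Limits Opposite

set_option linter.unusedSectionVars false

noncomputable section
attribute [local instance] Classical.propDecidable

namespace Stmt12

variable {C : Type} [SmallCategory C] [HasFiniteLimits C] [Preregular C]

def Cov {V W : C} (f : V ⟶ W) : Prop :=
  ∃ (T : C) (π : T ⟶ W), EffectiveEpi π ∧ ∃ a : T ⟶ V, a ≫ f = π

lemma Cov.id (W : C) : Cov (𝟙 W) := ⟨W, 𝟙 W, inferInstance, 𝟙 W, by simp⟩

lemma Cov.of_effectiveEpi {V W : C} (f : V ⟶ W) (h : EffectiveEpi f) : Cov f :=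
  ⟨V, f, h, 𝟙 V, by simp⟩

lemma Cov.of_fac {X Y T : C} {f : X ⟶ Y} {c : T ⟶ Y} (hc : Cov c) (a : T ⟶ X)
    (h : a ≫ f = c) : Cov f := by
  obtain ⟨T', π, hπ, b, hb⟩ := hc
  exact ⟨T', π, hπ, b ≫ a, by rw [Category.assoc, h, hb]⟩

lemma Cov.comp {X Y Z : C} {f : X ⟶ Y} {g : Y ⟶ Z} (hf : Cov f) (hg : Cov g) :
    Cov (f ≫ g) := by
  obtain ⟨T, π, hπ, a, ha⟩ := hg
  obtain ⟨S, ρ, hρ, b, hb⟩ := hf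
  obtain ⟨W, h, hh, i, hi⟩ := Preregular.exists_fac (g := ρ) a
  refine ⟨W, h ≫ π, ?_, i ≫ b, ?_⟩
  · haveI := hπ; haveI := hh; infer_instance
  · rw [Category.assoc, ← Category.assoc b f g, hb]
    rw [← Category.assoc, hi, Category.assoc, ha]

lemma Cov.pullback_fst {X Y Z : C} (f : X ⟶ Z) (g : Y ⟶ Z) (hg : EffectiveEpi g) :
    Cov (pullback.fst f g) := by
  haveI := hg
  obtain ⟨W, h, hh, i, hi⟩ := Preregular.exists_fac f g
  exact ⟨W, h, hh, pullback.lift h i hi.symm, pullback.lift_fst _ _ _⟩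

lemma Cov.comp_iso {X Y Z : C} (e : X ⟶ Y) [IsIso e] {f : Y ⟶ Z} (hf : Cov f) :
    Cov (e ≫ f) := by
  obtain ⟨T, π, hπ, a, ha⟩ := hf
  exact ⟨T, π, hπ, a ≫ inv e, by simp [ha]⟩

lemma Cov.iso_comp {X Y Z : C} {f : X ⟶ Y} (e : Y ⟶ Z) [IsIso e] (hf : Cov f) :
    Cov (f ≫ e) := by
  obtain ⟨T, π, hπ, a, ha⟩ := hf
  refine ⟨T, π ≫ e, ?_, a, by rw [← ha]; simp⟩
  haveI : EffectiveEpi e := by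
    have : IsSplitEpi e := IsSplitEpi.mk' ⟨inv e, by simp⟩
    infer_instance
  infer_instance

lemma Cov.injective {P : Cᵒᵖ ⥤ Type} (hP : Presieve.IsSheaf (regularTopology C) P)
    {V W : C} {f : V ⟶ W} (hf : Cov f) : Function.Injective (P.map f.op) := by
  intro s t hst
  obtain ⟨T, π, hπ, a, ha⟩ := hf
  have hmem : Sieve.generate (Presieve.singleton f) ∈ regularTopology C W :=
    regularTopology.mem_sieves_of_hasEffectiveEpi _ ⟨T, π, hπ, V, a, f, Presieve.singleton.mk, ha⟩
  refine (Presieve.IsSheaf.isSeparated hP _ hmem).ext ?_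
  rintro Z g ⟨Z', h, f', hf', rfl⟩
  cases hf'
  rw [op_comp, FunctorToTypes.map_comp_apply, FunctorToTypes.map_comp_apply, hst]

structure Pkg (C : Type) [SmallCategory C] [HasFiniteLimits C] [Preregular C] (U : C) where
  I : Type
  le : I → I → Prop
  le_refl : ∀ i, le i i
  le_trans : ∀ {i j k}, le i j → le j k → le i k
  G : I → C
  t : ∀ {i j}, le i j → (G i ⟶ G j)
  t_refl : ∀ i, t (le_refl i) = 𝟙 (G i)
  t_comp : ∀ {i j k} (h1 : le i j) (h2 : le j k), t h1 ≫ t h2 = t (le_trans h1 h2)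
  top : I
  le_top : ∀ i, le i top
  Gtop : G top = U
  directed : ∀ i j, ∃ k, le k i ∧ le k j
  cov : ∀ i, Cov (t (le_top i))

variable {U : C}

structure Prob (P : Pkg C U) where
  i : P.I
  Y : C
  X : C
  g : P.G i ⟶ Y
  f : X ⟶ Y
  epi : EffectiveEpi f

variable {P : Pkg C U}

/-- The iterated pullback solving the problems in `S` over base `P.G k`,
together with its structural map. -/
def twr (k : P.I) : (S : List (Prob P)) → (∀ p ∈ S, P.le k p.i) → Σ O : C, (O ⟶ P.G k)
  | [], _ => ⟨P.G k, 𝟙 _⟩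
  | p :: S, h =>
    let T := twr k S (fun q hq => h q (List.mem_cons_of_mem _ hq))
    ⟨pullback (T.2 ≫ P.t (h p (List.mem_cons_self)) ≫ p.g) p.f,
      pullback.fst _ _ ≫ T.2⟩

lemma twr_nil (k : P.I) (h : ∀ p ∈ ([] : List (Prob P)), P.le k p.i) :
    twr k [] h = ⟨P.G k, 𝟙 _⟩ := rfl

lemma twr_cons (k : P.I) (p : Prob P) (S : List (Prob P))
    (h : ∀ q ∈ p :: S, P.le k q.i) :
    twr k (p :: S) h =
      ⟨pullback ((twr k S (fun q hq => h q (List.mem_cons_of_mem _ hq))).2 ≫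
          P.t (h p (List.mem_cons_self)) ≫ p.g) p.f,
        pullback.fst _ _ ≫ (twr k S (fun q hq => h q (List.mem_cons_of_mem _ hq))).2⟩ := rfl

/-- Projection of the tower to the solution of the problem `p ∈ S`. -/
def twrLeg (k : P.I) : (S : List (Prob P)) → (hS : ∀ p ∈ S, P.le k p.i) → (p : Prob P) →
    p ∈ S → ((twr k S hS).1 ⟶ p.X)
  | [], _, p, hm => absurd hm (by simp)
  | q :: S, hS, p, hm =>
    if h : p = q then
      h ▸ (pullback.snd _ _ :
        (twr k (q :: S) hS).1 ⟶ q.X)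
    else
      pullback.fst _ _ ≫ twrLeg k S (fun r hr => hS r (List.mem_cons_of_mem _ hr)) p
        (by rcases List.mem_cons.mp hm with h' | h'; exact absurd h' h; exact h')

lemma twrLeg_fac (k : P.I) : ∀ (S : List (Prob P)) (hS : ∀ p ∈ S, P.le k p.i) (p : Prob P)
    (hm : p ∈ S), twrLeg k S hS p hm ≫ p.f = (twr k S hS).2 ≫ P.t (hS p hm) ≫ p.g
  | [], _, p, hm => absurd hm (by simp)
  | q :: S, hS, p, hm => by
    rw [twrLeg]
    by_cases h : p = q
    · subst h
      rw [dif_pos rfl]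
      have := (pullback.condition (f := ((twr k S (fun r hr => hS r (List.mem_cons_of_mem _ hr))).2 ≫
          P.t (hS p (List.mem_cons_self)) ≫ p.g)) (g := p.f)).symm
      simpa [twr_cons] using this
    · rw [dif_neg h]
      have := twrLeg_fac k S (fun r hr => hS r (List.mem_cons_of_mem _ hr)) p
        (by rcases List.mem_cons.mp hm with h' | h'; exact absurd h' h; exact h')
      simp only [twr_cons, Category.assoc]
      rw [this]

end Stmt12

namespace Stmt12
variable {C : Type} [SmallCategory C] [HasFiniteLimits C] [Preregular C] {U : C} {P : Pkg C U}

lemma twr_cov (k : P.I) : ∀ (S : List (Prob P)) (hS : ∀ p ∈ S, P.le k p.i),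
    Cov ((twr k S hS).2)
  | [], _ => Cov.id _
  | p :: S, hS => by
    have := twr_cov k S (fun q hq => hS q (List.mem_cons_of_mem _ hq))
    exact Cov.comp (Cov.pullback_fst _ _ p.epi) this

/-- The canonical map between towers. -/
def twrMap {k : P.I} (S : List (Prob P)) (hS : ∀ p ∈ S, P.le k p.i) {k' : P.I}
    (hk : P.le k k') :
    (S' : List (Prob P)) → (hS' : ∀ p ∈ S', P.le k' p.i) → (sub : ∀ p ∈ S', p ∈ S) →
    {m : (twr k S hS).1 ⟶ (twr k' S' hS').1 //
      m ≫ (twr k' S' hS').2 = (twr k S hS).2 ≫ P.t hk}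
  | [], _, _ => ⟨(twr k S hS).2 ≫ P.t hk, by simp [twr_nil]⟩
  | p :: S', hS', sub =>
    let prev := twrMap S hS hk S' (fun q hq => hS' q (List.mem_cons_of_mem _ hq))
      (fun q hq => sub q (List.mem_cons_of_mem _ hq))
    ⟨pullback.lift prev.1 (twrLeg k S hS p (sub p (List.mem_cons_self)))
      (by
        rw [twrLeg_fac k S hS p (sub p (List.mem_cons_self)), ← Category.assoc,
          prev.2, Category.assoc,
          ← P.t_comp hk (hS' p (List.mem_cons_self))]
        simp [Category.assoc]),
      by
        show pullback.lift _ _ _ ≫ pullback.fst _ _ ≫ _ = _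
        rw [← Category.assoc, pullback.lift_fst, prev.2]⟩

lemma twrMap_leg {k : P.I} (S : List (Prob P)) (hS : ∀ p ∈ S, P.le k p.i) {k' : P.I}
    (hk : P.le k k') :
    ∀ (S' : List (Prob P)) (hS' : ∀ p ∈ S', P.le k' p.i) (sub : ∀ p ∈ S', p ∈ S)
      (p : Prob P) (hm : p ∈ S'),
      (twrMap S hS hk S' hS' sub).1 ≫ twrLeg k' S' hS' p hm = twrLeg k S hS p (sub p hm)
  | [], hS', sub, p, hm => absurd hm (by simp)
  | q :: S', hS', sub, p, hm => by
    rw [twrLeg]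
    by_cases h : p = q
    · subst h
      rw [dif_pos rfl]
      exact pullback.lift_snd _ _ _
    · rw [dif_neg h]
      erw [← Category.assoc]
      show (pullback.lift _ _ _ ≫ pullback.fst _ _) ≫ _ = _
      rw [pullback.lift_fst]
      exact twrMap_leg S hS hk S' _ _ p _

lemma twrMap_unique {k : P.I} (S : List (Prob P)) (hS : ∀ p ∈ S, P.le k p.i) {k' : P.I}
    (hk : P.le k k') :
    ∀ (S' : List (Prob P)) (hS' : ∀ p ∈ S', P.le k' p.i) (sub : ∀ p ∈ S', p ∈ S)
      (hnd : S'.Nodup)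
      (m : (twr k S hS).1 ⟶ (twr k' S' hS').1),
      m ≫ (twr k' S' hS').2 = (twr k S hS).2 ≫ P.t hk →
      (∀ (p : Prob P) (hm : p ∈ S'), m ≫ twrLeg k' S' hS' p hm = twrLeg k S hS p (sub p hm)) →
      m = (twrMap S hS hk S' hS' sub).1
  | [], hS', sub, _, m, hstruct, _ => by
    show m = (twr k S hS).2 ≫ P.t hk
    rw [show (twr k' [] hS').2 = 𝟙 _ from rfl] at hstruct
    exact (Category.comp_id m).symm.trans hstruct
  | p :: S', hS', sub, hnd, m, hstruct, hlegs => by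
    show m = pullback.lift _ _ _
    have hnd' := List.nodup_cons.mp hnd
    apply pullback.hom_ext
    · rw [pullback.lift_fst]
      apply twrMap_unique S hS hk S' _ _ hnd'.2
      · have : (twr k' (p :: S') hS').2 =
            pullback.fst _ _ ≫ (twr k' S' (fun q hq => hS' q (List.mem_cons_of_mem _ hq))).2 := rfl
        erw [this, ← Category.assoc] at hstruct
        exact hstruct
      · intro q hm
        have hqp : ¬ q = p := fun h => hnd'.1 (h ▸ hm)
        have := hlegs q (List.mem_cons_of_mem _ hm)
        rw [twrLeg, dif_neg hqp] at this
        erw [Category.assoc]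
        exact this
    · rw [pullback.lift_snd]
      have := hlegs p (List.mem_cons_self)
      rw [twrLeg, dif_pos rfl] at this
      exact this

end Stmt12

namespace Stmt12
variable {C : Type} [SmallCategory C] [HasFiniteLimits C] [Preregular C] {U : C}

structure NewObj (P : Pkg C U) where
  k : P.I
  S : List (Prob P)
  hS : ∀ p ∈ S, P.le k p.i
  nodup : S.Nodup

/-- One step of the construction: adjoin solutions to all finite families of
lifting problems. -/
def step (P : Pkg C U) : Pkg C U where
  I := P.I ⊕ NewObj P
  le x y :=
    match x, y with
    | .inl i, .inl j => P.le i j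
    | .inr n, .inl j => P.le n.k j
    | .inl _, .inr _ => False
    | .inr n, .inr m => P.le n.k m.k ∧ ∀ p ∈ m.S, p ∈ n.S
  le_refl x := by cases x with
    | inl i => exact P.le_refl i
    | inr n => exact ⟨P.le_refl n.k, fun p hp => hp⟩
  le_trans {x y z} h1 h2 := by
    cases x with
    | inl i => cases y with
      | inl j => cases z with
        | inl l => exact P.le_trans h1 h2
        | inr m => exact h2.elim
      | inr n => exact h1.elim
    | inr n => cases y with
      | inl j => cases z with
        | inl l => exact P.le_trans h1 h2
        | inr m => exact h2.elim
      | inr m => cases z with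
        | inl l => exact P.le_trans h1.1 h2
        | inr l => exact ⟨P.le_trans h1.1 h2.1, fun p hp => h1.2 p (h2.2 p hp)⟩
  G x :=
    match x with
    | .inl i => P.G i
    | .inr n => (twr n.k n.S n.hS).1
  t {x y} h :=
    match x, y, h with
    | .inl _, .inl _, h => P.t h
    | .inr n, .inl _, h => (twr n.k n.S n.hS).2 ≫ P.t h
    | .inr n, .inr m, h => (twrMap n.S n.hS h.1 m.S m.hS h.2).1
  t_refl x := by
    cases x with
    | inl i => exact P.t_refl i
    | inr n =>
      refine (twrMap_unique n.S n.hS (P.le_refl n.k) n.S n.hS (fun p hp => hp) n.nodup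
        (𝟙 _) ?_ ?_).symm
      · rw [Category.id_comp, P.t_refl, Category.comp_id]
      · intro p hm
        rw [Category.id_comp]
  t_comp {x y z} h1 h2 := by
    cases x with
    | inl i => cases y with
      | inl j => cases z with
        | inl l => exact P.t_comp h1 h2
        | inr m => exact h2.elim
      | inr n => exact h1.elim
    | inr n => cases y with
      | inl j => cases z with
        | inl l => show ((twr n.k n.S n.hS).2 ≫ P.t h1) ≫ P.t h2 = _
                   rw [Category.assoc, P.t_comp]
        | inr m => exact h2.elim
      | inr m => cases z with
        | inl l =>
          show (twrMap n.S n.hS h1.1 m.S m.hS h1.2).1 ≫ (twr m.k m.S m.hS).2 ≫ P.t h2 = _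
          rw [← Category.assoc, (twrMap n.S n.hS h1.1 m.S m.hS h1.2).2, Category.assoc,
            P.t_comp]
        | inr l =>
          show (twrMap n.S n.hS h1.1 m.S m.hS h1.2).1 ≫
              (twrMap m.S m.hS h2.1 l.S l.hS h2.2).1 =
            (twrMap n.S n.hS (P.le_trans h1.1 h2.1) l.S l.hS
              (fun p hp => h1.2 p (h2.2 p hp))).1
          refine twrMap_unique n.S n.hS _ l.S l.hS _ l.nodup _ ?_ ?_
          · rw [Category.assoc, (twrMap m.S m.hS h2.1 l.S l.hS h2.2).2, ← Category.assoc,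
              (twrMap n.S n.hS h1.1 m.S m.hS h1.2).2, Category.assoc, P.t_comp]
          · intro p hm
            rw [Category.assoc, twrMap_leg m.S m.hS h2.1 l.S l.hS h2.2 p hm,
              twrMap_leg n.S n.hS h1.1 m.S m.hS h1.2 p (h2.2 p hm)]
  top := .inl P.top
  le_top x := by
    cases x with
    | inl i => exact P.le_top i
    | inr n => exact P.le_top n.k
  Gtop := P.Gtop
  directed x y := by
    cases x with
    | inl i => cases y with
      | inl j =>
        obtain ⟨k, h1, h2⟩ := P.directed i j
        exact ⟨.inl k, h1, h2⟩
      | inr m =>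
        obtain ⟨k, h1, h2⟩ := P.directed i m.k
        refine ⟨.inr ⟨k, m.S, fun p hp => P.le_trans h2 (m.hS p hp), m.nodup⟩, h1, h2,
          fun p hp => hp⟩
    | inr n => cases y with
      | inl j =>
        obtain ⟨k, h1, h2⟩ := P.directed n.k j
        exact ⟨.inr ⟨k, n.S, fun p hp => P.le_trans h1 (n.hS p hp), n.nodup⟩,
          ⟨h1, fun p hp => hp⟩, h2⟩
      | inr m =>
        obtain ⟨k, h1, h2⟩ := P.directed n.k m.k
        refine ⟨.inr ⟨k, (n.S ++ m.S).dedup, ?_, List.nodup_dedup _⟩, ⟨h1, ?_⟩, ⟨h2, ?_⟩⟩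
        · intro p hp
          rcases List.mem_append.mp (List.mem_dedup.mp hp) with h | h
          · exact P.le_trans h1 (n.hS p h)
          · exact P.le_trans h2 (m.hS p h)
        · intro p hp
          exact List.mem_dedup.mpr (List.mem_append.mpr (Or.inl hp))
        · intro p hp
          exact List.mem_dedup.mpr (List.mem_append.mpr (Or.inr hp))
  cov x := by
    cases x with
    | inl i => exact P.cov i
    | inr n => exact Cov.comp (twr_cov n.k n.S n.hS) (P.cov n.k)

end Stmt12

namespace Stmt12
variable {C : Type} [SmallCategory C] [HasFiniteLimits C] [Preregular C]

/-- The stages of the construction, starting from the one-object diagram at `U`. -/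
def stage (U : C) : ℕ → Pkg C U
  | 0 =>
    { I := PUnit, le := fun _ _ => True, le_refl := fun _ => trivial,
      le_trans := fun _ _ => trivial, G := fun _ => U, t := fun _ => 𝟙 U,
      t_refl := fun _ => rfl, t_comp := fun _ _ => Category.comp_id _,
      top := ⟨⟩, le_top := fun _ => trivial, Gtop := rfl,
      directed := fun _ _ => ⟨⟨⟩, trivial, trivial⟩, cov := fun _ => Cov.id U }
  | n+1 => step (stage U n)

variable {U : C}

/-- Embedding of stage `n` into stage `n + k`. -/
def embK (n : ℕ) : ∀ k, (stage U n).I → (stage U (n+k)).I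
  | 0, x => x
  | k+1, x => Sum.inl (embK n k x)

/-- Cast between stages along an equality of levels. -/
def cI {n m : ℕ} (h : n = m) (x : (stage U n).I) : (stage U m).I := h ▸ x

lemma cI_self {n : ℕ} (h : n = n) (x : (stage U n).I) : cI h x = x := by
  rw [show h = rfl from rfl]; rfl

lemma cI_cI {n m l : ℕ} (h : n = m) (h' : m = l) (x : (stage U n).I) :
    cI h' (cI h x) = cI (h.trans h') x := by subst h; subst h'; rfl

lemma cI_G {n m : ℕ} (h : n = m) (x : (stage U n).I) :
    (stage U m).G (cI h x) = (stage U n).G x := by subst h; rfl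

lemma cI_le {n m : ℕ} (h : n = m) (x y : (stage U n).I) (hle : (stage U n).le x y) :
    (stage U m).le (cI h x) (cI h y) := by subst h; exact hle

lemma cI_t {n m : ℕ} (h : n = m) (x y : (stage U n).I) (hle : (stage U n).le x y) :
    (stage U m).t (cI_le h x y hle) =
      eqToHom (cI_G h x) ≫ (stage U n).t hle ≫ eqToHom (cI_G h y).symm := by
  subst h; erw [eqToHom_refl, eqToHom_refl, Category.id_comp, Category.comp_id]; rfl

lemma cI_top {n m : ℕ} (h : n = m) : cI h (stage U n).top = (stage U m).top := by
  subst h; rfl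

lemma embK_congr (n : ℕ) {k k' : ℕ} (h : k = k') (x : (stage U n).I) :
    embK n k' x = cI (by rw [h]) (embK n k x) := by subst h; rw [cI_self]

lemma G_embK (n : ℕ) : ∀ (k : ℕ) (x : (stage U n).I),
    (stage U (n+k)).G (embK n k x) = (stage U n).G x
  | 0, x => rfl
  | k+1, x => G_embK n k x

lemma le_embK (n : ℕ) : ∀ (k : ℕ) {x y : (stage U n).I}, (stage U n).le x y →
    (stage U (n+k)).le (embK n k x) (embK n k y)
  | 0, _, _, h => h
  | k+1, x, y, h => le_embK n k h

lemma t_embK (n : ℕ) : ∀ (k : ℕ) {x y : (stage U n).I} (h : (stage U n).le x y),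
    (stage U (n+k)).t (le_embK n k h) =
      eqToHom (G_embK n k x) ≫ (stage U n).t h ≫ eqToHom (G_embK n k y).symm
  | 0, x, y, h => by erw [eqToHom_refl, eqToHom_refl, Category.id_comp, Category.comp_id]; rfl
  | k+1, x, y, h => t_embK n k h

lemma embK_top (n : ℕ) : ∀ k, embK n k (stage U n).top = (stage U (n+k)).top
  | 0 => rfl
  | k+1 => congrArg Sum.inl (embK_top n k)

/-- The index "set" of the colimit diagram. -/
abbrev Iw (U : C) : Type := Σ n : ℕ, (stage U n).I

def Gw (a : Iw U) : C := (stage U a.1).G a.2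

/-- Representation of `a` at a (higher) level `L`. -/
def toLvl (a : Iw U) (L : ℕ) (h : a.1 ≤ L) : (stage U L).I :=
  cI (Nat.add_sub_cancel' h) (embK a.1 (L - a.1) a.2)

lemma cI_inl {n m : ℕ} (h : n = m) (x : (stage U n).I) (h' : n + 1 = m + 1) :
    cI h' (Sum.inl x : (stage U (n+1)).I) = (Sum.inl (cI h x) : (stage U (m+1)).I) := by
  subst h; rw [cI_self]; exact cI_self h' _

lemma toLvl_self (a : Iw U) : toLvl a a.1 le_rfl = a.2 := by
  rw [toLvl, embK_congr a.1 (Nat.sub_self a.1).symm a.2, cI_cI, cI_self]; rfl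

lemma toLvl_succ (a : Iw U) (L : ℕ) (h : a.1 ≤ L) (h' : a.1 ≤ L + 1) :
    toLvl a (L+1) h' = Sum.inl (toLvl a L h) := by
  rw [toLvl, toLvl, embK_congr a.1 (show (L - a.1) + 1 = L + 1 - a.1 by omega) a.2, cI_cI]
  exact cI_inl (Nat.add_sub_cancel' h) _ _

lemma t_congr {n : ℕ} {x x' y y' : (stage U n).I} (hx : x = x') (hy : y = y')
    (hle : (stage U n).le x y) :
    (stage U n).t hle =
      eqToHom (show (stage U n).G x = (stage U n).G x' by rw [hx]) ≫
        (stage U n).t (hx ▸ hy ▸ hle) ≫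
        eqToHom (show (stage U n).G y' = (stage U n).G y by rw [hy]) := by
  subst hx; subst hy; simp

lemma TG (a : Iw U) (L : ℕ) (h : a.1 ≤ L) :
    (stage U L).G (toLvl a L h) = Gw a :=
  (cI_G _ _).trans (G_embK _ _ _)

lemma toLvl_le_succ (a b : Iw U) (L : ℕ) (ha : a.1 ≤ L) (hb : b.1 ≤ L)
    (hle : (stage U L).le (toLvl a L ha) (toLvl b L hb)) :
    (stage U (L+1)).le (toLvl a (L+1) (ha.trans (Nat.le_succ L)))
      (toLvl b (L+1) (hb.trans (Nat.le_succ L))) := by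
  rw [toLvl_succ a L ha, toLvl_succ b L hb]
  exact hle

lemma toLvl_le_mono (a b : Iw U) {L L' : ℕ} (hL : L ≤ L') (ha : a.1 ≤ L) (hb : b.1 ≤ L)
    (hle : (stage U L).le (toLvl a L ha) (toLvl b L hb)) :
    (stage U L').le (toLvl a L' (ha.trans hL)) (toLvl b L' (hb.trans hL)) := by
  induction hL with
  | refl => exact hle
  | step h ih => exact toLvl_le_succ a b _ _ _ ih

/-- The transition map computed at level `L`. -/
def tAt (a b : Iw U) (L : ℕ) (ha : a.1 ≤ L) (hb : b.1 ≤ L)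
    (hle : (stage U L).le (toLvl a L ha) (toLvl b L hb)) : Gw a ⟶ Gw b :=
  eqToHom (TG a L ha).symm ≫ (stage U L).t hle ≫ eqToHom (TG b L hb)

lemma tAt_succ (a b : Iw U) (L : ℕ) (ha : a.1 ≤ L) (hb : b.1 ≤ L)
    (hle : (stage U L).le (toLvl a L ha) (toLvl b L hb)) :
    tAt a b (L+1) (ha.trans (Nat.le_succ L)) (hb.trans (Nat.le_succ L))
      (toLvl_le_succ a b L ha hb hle) = tAt a b L ha hb hle := by
  rw [tAt, t_congr (toLvl_succ a L ha (ha.trans (Nat.le_succ L)))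
    (toLvl_succ b L hb (hb.trans (Nat.le_succ L))), tAt]
  simp only [eqToHom_trans, Category.assoc, eqToHom_trans_assoc]
  rfl

lemma tAt_mono (a b : Iw U) {L L' : ℕ} (hL : L ≤ L') (ha : a.1 ≤ L) (hb : b.1 ≤ L)
    (hle : (stage U L).le (toLvl a L ha) (toLvl b L hb)) :
    tAt a b L' (ha.trans hL) (hb.trans hL) (toLvl_le_mono a b hL ha hb hle) =
      tAt a b L ha hb hle := by
  induction hL with
  | refl => rfl
  | step h ih => rw [← ih]; exact tAt_succ a b _ _ _ _

lemma tAt_indep (a b : Iw U) (L₁ L₂ : ℕ) (ha₁ : a.1 ≤ L₁) (hb₁ : b.1 ≤ L₁)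
    (hle₁ : (stage U L₁).le (toLvl a L₁ ha₁) (toLvl b L₁ hb₁))
    (ha₂ : a.1 ≤ L₂) (hb₂ : b.1 ≤ L₂)
    (hle₂ : (stage U L₂).le (toLvl a L₂ ha₂) (toLvl b L₂ hb₂)) :
    tAt a b L₁ ha₁ hb₁ hle₁ = tAt a b L₂ ha₂ hb₂ hle₂ := by
  rw [← tAt_mono a b (Nat.le_max_left L₁ L₂) ha₁ hb₁ hle₁,
    ← tAt_mono a b (Nat.le_max_right L₁ L₂) ha₂ hb₂ hle₂]

/-- The colimit preorder. -/
def lew (a b : Iw U) : Prop :=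
  ∃ (L : ℕ) (ha : a.1 ≤ L) (hb : b.1 ≤ L),
    (stage U L).le (toLvl a L ha) (toLvl b L hb)

/-- The transition map. -/
def tw {a b : Iw U} (h : lew a b) : Gw a ⟶ Gw b :=
  tAt a b h.choose h.choose_spec.choose h.choose_spec.choose_spec.choose
    h.choose_spec.choose_spec.choose_spec

lemma tw_spec {a b : Iw U} (h : lew a b) (L : ℕ) (ha : a.1 ≤ L) (hb : b.1 ≤ L)
    (hle : (stage U L).le (toLvl a L ha) (toLvl b L hb)) :
    tw h = tAt a b L ha hb hle :=
  tAt_indep a b _ _ _ _ _ _ _ _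

lemma lew_refl (a : Iw U) : lew a a :=
  ⟨a.1, le_rfl, le_rfl, (stage U a.1).le_refl _⟩

lemma lew_trans {a b c : Iw U} (h1 : lew a b) (h2 : lew b c) : lew a c := by
  obtain ⟨L₁, ha₁, hb₁, hle₁⟩ := h1
  obtain ⟨L₂, hb₂, hc₂, hle₂⟩ := h2
  refine ⟨max L₁ L₂, ha₁.trans (Nat.le_max_left _ _), hc₂.trans (Nat.le_max_right _ _),
    (stage U _).le_trans (toLvl_le_mono a b (Nat.le_max_left L₁ L₂) ha₁ hb₁ hle₁) ?_⟩
  exact toLvl_le_mono b c (Nat.le_max_right L₁ L₂) hb₂ hc₂ hle₂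

lemma tw_refl {a : Iw U} (h : lew a a) : tw h = 𝟙 (Gw a) := by
  rw [tw_spec h a.1 le_rfl le_rfl ((stage U a.1).le_refl _), tAt,
    (stage U a.1).t_refl (toLvl a a.1 le_rfl)]
  simp

lemma tw_comp {a b c : Iw U} (h1 : lew a b) (h2 : lew b c) (h3 : lew a c) :
    tw h1 ≫ tw h2 = tw h3 := by
  obtain ⟨L₁, ha₁, hb₁, hle₁⟩ := h1
  obtain ⟨L₂, hb₂, hc₂, hle₂⟩ := h2
  have e1 := toLvl_le_mono a b (Nat.le_max_left L₁ L₂) ha₁ hb₁ hle₁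
  have e2 := toLvl_le_mono b c (Nat.le_max_right L₁ L₂) hb₂ hc₂ hle₂
  erw [tw_spec _ (max L₁ L₂) _ _ e1, tw_spec _ (max L₁ L₂) _ _ e2,
    tw_spec h3 (max L₁ L₂) (ha₁.trans (Nat.le_max_left _ _))
      (hc₂.trans (Nat.le_max_right _ _)) ((stage U _).le_trans e1 e2)]
  rw [tAt, tAt, tAt]
  simp only [Category.assoc, eqToHom_trans_assoc, eqToHom_refl, Category.id_comp]
  rw [← Category.assoc ((stage U _).t e1), (stage U _).t_comp e1 e2]

def topw : Iw U := ⟨0, (stage U 0).top⟩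

lemma toLvl_top : ∀ (L : ℕ) (h : (topw (U := U)).1 ≤ L), toLvl topw L h = (stage U L).top
  | 0, _ => toLvl_self topw
  | L+1, h => by
    erw [toLvl_succ topw L (Nat.zero_le L), toLvl_top L]
    rfl

lemma lew_top (a : Iw U) : lew a topw := by
  refine ⟨a.1, le_rfl, Nat.zero_le _, ?_⟩
  erw [toLvl_self a, toLvl_top a.1]
  exact (stage U a.1).le_top a.2

lemma cov_w (a : Iw U) (h : lew a (topw (U := U))) : Cov (tw h) := by
  obtain ⟨L, ha, hb, hle⟩ := id h
  rw [tw_spec h L ha hb hle, tAt, t_congr rfl (toLvl_top L hb)]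
  simp only [Category.assoc]
  apply Cov.comp_iso
  apply Cov.comp_iso
  apply Cov.iso_comp
  exact (stage U L).cov (toLvl a L ha)

lemma directed_w (a b : Iw U) : ∃ c : Iw U, lew c a ∧ lew c b := by
  set L := max a.1 b.1 with hL
  have ha : a.1 ≤ L := Nat.le_max_left _ _
  have hb : b.1 ≤ L := Nat.le_max_right _ _
  obtain ⟨k, h1, h2⟩ := (stage U L).directed (toLvl a L ha) (toLvl b L hb)
  refine ⟨⟨L, k⟩, ⟨L, le_rfl, ha, ?_⟩, ⟨L, le_rfl, hb, ?_⟩⟩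
  · rw [toLvl_self ⟨L, k⟩]; exact h1
  · rw [toLvl_self ⟨L, k⟩]; exact h2

lemma lift_w (a : Iw U) (Y X : C) (g : Gw a ⟶ Y) (f : X ⟶ Y) (hf : EffectiveEpi f) :
    ∃ (b : Iw U) (h : lew b a) (l : Gw b ⟶ X), l ≫ f = tw h ≫ g := by
  obtain ⟨n, x⟩ := a
  set p : Prob (stage U n) := ⟨x, Y, X, g, f, hf⟩ with hp
  have hmem : ∀ q ∈ [p], (stage U n).le x q.i := by
    intro q hq
    rw [List.mem_singleton] at hq
    subst hq
    exact (stage U n).le_refl x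
  set nob : NewObj (stage U n) := ⟨x, [p], hmem, List.nodup_singleton _⟩ with hnob
  set b : Iw U := ⟨n+1, Sum.inr nob⟩ with hb
  have hba : lew b ⟨n, x⟩ := by
    refine ⟨n+1, le_rfl, Nat.le_succ n, ?_⟩
    rw [toLvl_self b, toLvl_succ ⟨n, x⟩ n le_rfl, toLvl_self ⟨n, x⟩]
    exact (stage U n).le_refl x
  -- the tower over x solving p
  refine ⟨b, hba, pullback.snd _ _ ≫ eqToHom rfl, ?_⟩
  rw [tw_spec hba (n+1) le_rfl (Nat.le_succ n) (by
    rw [toLvl_self b, toLvl_succ ⟨n, x⟩ n le_rfl, toLvl_self ⟨n, x⟩]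
    exact (stage U n).le_refl x), tAt,
    t_congr (toLvl_self b) ((toLvl_succ ⟨n, x⟩ n le_rfl _).trans
      (congrArg Sum.inl (toLvl_self ⟨n, x⟩)))]
  -- now the middle transition is the tower structural map
  simp only [Category.comp_id, Category.assoc, eqToHom_trans_assoc, eqToHom_trans,
    eqToHom_refl, Category.id_comp]
  erw [Category.comp_id, ← pullback.condition]
  erw [eqToHom_refl, eqToHom_refl]
  refine Eq.trans ?_ (Category.id_comp _).symm
  refine Eq.trans ?_ (congrArg (CategoryStruct.comp ((stage U b.fst).t _)) (Category.id_comp g)).symm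
  show _ ≫ _ = ((twr x [p] hmem).2 ≫ (stage U n).t ((stage U n).le_refl x)) ≫ g
  show _ = (((pullback.fst _ _ : _ ⟶ (twr x [] _).1) ≫ 𝟙 _) ≫
    (stage U n).t ((stage U n).le_refl x)) ≫ g
  simp only [Category.comp_id, Category.id_comp, Category.assoc]
  exact (congrArg (CategoryStruct.comp (pullback.fst ((twr x [] (fun q hq => hmem q (List.mem_cons_of_mem _ hq))).2 ≫
    (stage U n).t ((stage U n).le_refl x) ≫ p.g) p.f)) (Category.id_comp ((stage U n).t ((stage U n).le_refl x) ≫ g))).trans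
    (Category.assoc _ _ _).symm

instance : Preorder (Iw U) where
  le := lew
  le_refl := lew_refl
  le_trans _ _ _ := lew_trans

/-- The diagram functor. -/
def GF (U : C) : Iw U ⥤ C where
  obj := Gw
  map {a b} f := tw (leOfHom f)
  map_id a := tw_refl _
  map_comp {a b c} f g := (tw_comp _ _ _).symm

instance : IsCofiltered (Iw U) where
  cone_objs a b := by
    obtain ⟨c, h1, h2⟩ := directed_w a b
    exact ⟨c, homOfLE h1, homOfLE h2, trivial⟩
  cone_maps a b f g := ⟨a, 𝟙 a, by subsingleton⟩
  nonempty := ⟨topw⟩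

/-- The point: a filtered colimit of corepresentables over the diagram. -/
def uF (U : C) : C ⥤ Type := ((GF U).op ⋙ coyoneda).flip ⋙ colim

instance : PreservesFiniteLimits (((GF U).op ⋙ coyoneda).flip) :=
  ⟨fun J _ _ => preservesLimitsOfShape_of_evaluation _ J
    (fun k => by
      haveI : PreservesLimitsOfShape J (((GF U).op ⋙ coyoneda).obj k) :=
        (inferInstance : PreservesLimitsOfShape J (coyoneda.obj ((GF U).op.obj k)))
      exact preservesLimitsOfShape_of_natIso (flipCompEvaluation ((GF U).op ⋙ coyoneda) k).symm)⟩

instance : PreservesFiniteLimits (uF U) := by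
  haveI : PreservesFiniteLimits (colim : ((Iw U)ᵒᵖ ⥤ Type) ⥤ Type) :=
    Limits.filtered_colim_preservesFiniteLimits_of_types
  exact comp_preservesFiniteLimits _ _

lemma uF_surj {X Y : C} (f : X ⟶ Y) (hf : EffectiveEpi f) :
    Function.Surjective ((uF U).map f) := by
  intro ybar
  obtain ⟨j, g, hg⟩ := Types.jointly_surjective'
    (F := ((GF U).op ⋙ coyoneda).flip.obj Y) ybar
  obtain ⟨b, h, l, hl⟩ := lift_w j.unop Y X g f hf
  refine ⟨colimit.ι (((GF U).op ⋙ coyoneda).flip.obj X) (op b) l, ?_⟩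
  have step1 : (uF U).map f (colimit.ι (((GF U).op ⋙ coyoneda).flip.obj X) (op b) l) =
      colimit.ι (((GF U).op ⋙ coyoneda).flip.obj Y) (op b) (l ≫ f) := by
    exact Types.Colimit.ι_map_apply (((GF U).op ⋙ coyoneda).flip.map f) (op b) l
  erw [step1, hl]
  have step2 := Types.Colimit.w_apply (F := ((GF U).op ⋙ coyoneda).flip.obj Y)
    (j := op j.unop) (j' := op b) (x := g) (homOfLE h).op
  rw [← hg]
  exact step2

def x0 (U : C) : (uF U).obj U :=
  colimit.ι (((GF U).op ⋙ coyoneda).flip.obj U) (op (topw (U := U))) (𝟙 U)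

instance : RepresentablyFlat (uF U) := flat_of_preservesFiniteLimits _

instance : IsCofiltered (uF U).Elements :=
  IsCofiltered.of_equivalence (CategoryOfElements.structuredArrowEquivalence (uF U)).symm

lemma inj (U : C) (F : Sheaf (regularTopology C) Type) (s t : F.val.obj (op U))
    (hst : colimit.ι ((CategoryOfElements.π (uF U)).op ⋙ F.val)
        (op ⟨U, x0 U⟩) s =
      colimit.ι ((CategoryOfElements.π (uF U)).op ⋙ F.val) (op ⟨U, x0 U⟩) t) :
    s = t := by
  have hsheaf : Presieve.IsSheaf (regularTopology C) F.val :=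
    (isSheaf_iff_isSheaf_of_type _ _).mp F.cond
  obtain ⟨k, f1, f2, hf⟩ := (Types.FilteredColimit.colimit_eq_iff
    (F := (CategoryOfElements.π (uF U)).op ⋙ F.val)).mp hst
  set V : C := k.unop.1 with hV
  set y : (uF U).obj V := k.unop.2 with hy
  set h₁ : V ⟶ U := f1.unop.1 with hh₁
  set h₂ : V ⟶ U := f2.unop.1 with hh₂
  have hy₁ : (uF U).map h₁ y = x0 U := f1.unop.2
  have hy₂ : (uF U).map h₂ y = x0 U := f2.unop.2
  have hFst : F.val.map h₁.op s = F.val.map h₂.op t := hf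
  -- pass to the equalizer of h₁ and h₂
  set e : equalizer h₁ h₂ ⟶ V := equalizer.ι h₁ h₂ with he
  have hew : (uF U).map e ≫ (uF U).map h₁ = (uF U).map e ≫ (uF U).map h₂ := by
    rw [← Functor.map_comp, ← Functor.map_comp, equalizer.condition]
  have lim1 : IsLimit (Fork.ofι ((uF U).map e) hew) :=
    isLimitForkMapOfIsLimit (uF U) (equalizer.condition h₁ h₂)
      (equalizerIsEqualizer h₁ h₂)
  obtain ⟨y', hy', -⟩ := (Types.type_equalizer_iff_unique ((uF U).map e) hew).mp
    ⟨lim1⟩ y (by rw [hy₁, hy₂])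
  -- represent y' in the colimit
  obtain ⟨j, g, hg⟩ := Types.jointly_surjective'
    (F := ((GF U).op ⋙ coyoneda).flip.obj (equalizer h₁ h₂)) y'
  -- (uF U).map (e ≫ h₁) y' = x0 U
  have hx0 : colimit.ι (((GF U).op ⋙ coyoneda).flip.obj U) j (g ≫ (e ≫ h₁)) =
      colimit.ι (((GF U).op ⋙ coyoneda).flip.obj U) (op (topw (U := U))) (𝟙 U) := by
    have e1 : (uF U).map (e ≫ h₁) y' =
        colimit.ι (((GF U).op ⋙ coyoneda).flip.obj U) j (g ≫ (e ≫ h₁)) := by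
      rw [← hg]
      exact Types.Colimit.ι_map_apply (((GF U).op ⋙ coyoneda).flip.map (e ≫ h₁)) j g
    rw [← e1, Functor.map_comp]
    show (uF U).map h₁ ((uF U).map e y') = x0 U
    rw [hy', hy₁]
  obtain ⟨K, α, β, hK⟩ := (Types.FilteredColimit.colimit_eq_iff
    (F := ((GF U).op ⋙ coyoneda).flip.obj U)).mp hx0
  -- hK : GF.map α.unop ≫ g ≫ e ≫ h₁ = GF.map β.unop ≫ 𝟙 U
  have hK' : (GF U).map α.unop ≫ (g ≫ (e ≫ h₁)) = (GF U).map β.unop ≫ 𝟙 U := hK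
  have hcov : Cov ((GF U).map α.unop ≫ (g ≫ (e ≫ h₁))) := by
    rw [hK']
    exact Cov.iso_comp (𝟙 U) (cov_w K.unop (leOfHom β.unop))
  set c₀ : Gw K.unop ⟶ equalizer h₁ h₂ := (GF U).map α.unop ≫ g with hc₀
  have hc : ((GF U).map α.unop ≫ g ≫ (e ≫ h₁)) = (c₀ ≫ e) ≫ h₁ := by
    simp [hc₀, Category.assoc]; exact (Category.assoc _ _ _).symm
  rw [hc] at hcov
  have key : F.val.map ((c₀ ≫ e) ≫ h₁).op s = F.val.map ((c₀ ≫ e) ≫ h₁).op t := by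
    have e2 : (c₀ ≫ e) ≫ h₁ = (c₀ ≫ e) ≫ h₂ := by
      rw [Category.assoc, Category.assoc, equalizer.condition]
    calc F.val.map ((c₀ ≫ e) ≫ h₁).op s
        = F.val.map (c₀ ≫ e).op (F.val.map h₁.op s) := by
          simp [FunctorToTypes.map_comp_apply]
      _ = F.val.map (c₀ ≫ e).op (F.val.map h₂.op t) := by rw [hFst]
      _ = F.val.map ((c₀ ≫ e) ≫ h₂).op t := by
          simp [FunctorToTypes.map_comp_apply]
      _ = F.val.map ((c₀ ≫ e) ≫ h₁).op t := by rw [← e2]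
  exact Cov.injective hsheaf hcov key

end Stmt12
end

theorem stmt_12 (C : Type) [SmallCategory C] [HasFiniteLimits C] [Preregular C]
    (U : C) :
    ∃ u : C ⥤ Type, PreservesFiniteLimits u ∧
      (∀ {X Y : C} (f : X ⟶ Y), EffectiveEpi f → Function.Surjective (u.map f)) ∧
      ∃ x₀ : u.obj U, ∀ F : Sheaf (regularTopology C) Type,
        Function.Injective (fun s : F.val.obj (op U) => germ u F.val U x₀ s) := by
  refine ⟨Stmt12.uF U, inferInstance, ?_, Stmt12.x0 U, ?_⟩
  · intro X Y f hf
    exact Stmt12.uF_surj f hf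
  · intro F
    intro s t hst
    exact Stmt12.inj U F s t hst
end
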